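/- arXiv:2105.08378 — 4 statements merged into one kernel-verified Lean document; each statement's English description precedes it below -/
import Mathlib

section
/- Let g : [0,1]^n → ℝ be a bounded function and let U ⊆ ℝ^n be any set with [−1,1]^n ⊆ U. Then inf_{c ∈ U} sup_{y ∈ Argmax(c)} g(y) = inf_{c ∈ [−1,1]^n} sup_{y ∈ Argmax(c)} g(y). -/
/-- The set of maximizers of `y ↦ cᵀy` over the unit box `[0,1]^n`. -/
def argmaxBox (n : ℕ) (c : Fin n → ℝ) : Set (Fin n → ℝ) :=
  {y | (∀ i, y i ∈ Set.Icc (0 : ℝ) 1) ∧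
    ∀ z : Fin n → ℝ, (∀ i, z i ∈ Set.Icc (0 : ℝ) 1) → ∑ i, c i * z i ≤ ∑ i, c i * y i}

lemma argmaxBox_smul (n : ℕ) (c : Fin n → ℝ) (t : ℝ) (ht : 0 < t) :
    argmaxBox n (t • c) = argmaxBox n c := by
  ext y
  simp only [argmaxBox, Set.mem_setOf_eq, Pi.smul_apply, smul_eq_mul]
  have key : ∀ w : Fin n → ℝ, ∑ i, t * c i * w i = t * ∑ i, c i * w i := by
    intro w; rw [Finset.mul_sum]; exact Finset.sum_congr rfl fun i _ => by ring
  constructor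
  · rintro ⟨h1, h2⟩
    refine ⟨h1, fun z hz => ?_⟩
    have := h2 z hz
    rw [key, key] at this
    exact le_of_mul_le_mul_left this ht
  · rintro ⟨h1, h2⟩
    refine ⟨h1, fun z hz => ?_⟩
    rw [key, key]
    exact mul_le_mul_of_nonneg_left (h2 z hz) ht.le

/-- For a bounded function `g` on the unit box and any uncertainty set `U ⊇ [-1,1]^n`,
the value `inf_{c ∈ U} sup_{y ∈ Argmax c} g(y)` equals the corresponding value for
`U = [-1,1]^n`. -/
theorem stmt_4 (n : ℕ) (g : (Fin n → ℝ) → ℝ) (M : ℝ)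
    (hg : ∀ y : Fin n → ℝ, (∀ i, y i ∈ Set.Icc (0 : ℝ) 1) → |g y| ≤ M)
    (U : Set (Fin n → ℝ))
    (hU : {c : Fin n → ℝ | ∀ i, c i ∈ Set.Icc (-1 : ℝ) 1} ⊆ U) :
    sInf ((fun c => sSup (g '' argmaxBox n c)) '' U) =
      sInf ((fun c => sSup (g '' argmaxBox n c)) ''
        {c : Fin n → ℝ | ∀ i, c i ∈ Set.Icc (-1 : ℝ) 1}) := by
  congr 1
  apply Set.Subset.antisymm
  · rintro _ ⟨c, hc, rfl⟩
    set m : ℝ := 1 + ∑ i, |c i| with hm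
    have hsum : (0:ℝ) ≤ ∑ i, |c i| := Finset.sum_nonneg fun i _ => abs_nonneg _
    have hmpos : 0 < m := by positivity
    have hbd : ∀ i, |c i| ≤ m := by
      intro i
      have : |c i| ≤ ∑ j, |c j| :=
        Finset.single_le_sum (fun j _ => abs_nonneg (c j)) (Finset.mem_univ i)
      linarith
    refine ⟨m⁻¹ • c, ?_, ?_⟩
    · intro i
      rw [Set.mem_Icc]
      have h1 : |m⁻¹ * c i| ≤ 1 := by
        rw [abs_mul, abs_of_pos (inv_pos.mpr hmpos)]
        rw [inv_mul_le_iff₀ hmpos, mul_one]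
        exact hbd i
      constructor
      · simpa using neg_le_of_abs_le h1
      · exact le_of_abs_le h1
    · simp only
      rw [argmaxBox_smul n c m⁻¹ (inv_pos.mpr hmpos)]
  · exact Set.image_mono hU
end

section
/- Let f : {0,1}^p × {0,1}^n → {0,1} be any function. Then the following are equivalent: (i) there exists x ∈ {0,1}^p such that f(x,y) = 1 for all y ∈ {0,1}^n; (ii) there exists x ∈ {0,1}^p such that for every c ∈ [−1,1]^n there exists a binary point y ∈ {0,1}^n that maximizes c^T y over [0,1]^n and satisfies f(x,y) = 1. -/
/-- The real point in `{0,1}^n` corresponding to a Boolean vector. -/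
def boolToReal {n : ℕ} (y : Fin n → Bool) : Fin n → ℝ := fun i => if y i then 1 else 0

/-- `f` is a QSAT yes-instance iff the optimistic robust bilevel problem has value 1:
some `x` is such that for every `c ∈ [-1,1]^n` the follower has a binary optimal
response `y` with `f x y = 1`. -/
theorem stmt_6 (p n : ℕ) (f : (Fin p → Bool) → (Fin n → Bool) → Bool) :
    (∃ x : Fin p → Bool, ∀ y : Fin n → Bool, f x y = true) ↔
    (∃ x : Fin p → Bool, ∀ c : Fin n → ℝ, (∀ i, c i ∈ Set.Icc (-1 : ℝ) 1) →
      ∃ y : Fin n → Bool, boolToReal y ∈ argmaxBox n c ∧ f x y = true) := by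
  constructor
  · rintro ⟨x, hx⟩
    refine ⟨x, fun c _ => ?_⟩
    refine ⟨fun i => decide (0 ≤ c i), ⟨fun i => ?_, fun z hz => ?_⟩, hx _⟩
    · unfold boolToReal
      by_cases h : (0:ℝ) ≤ c i <;> simp [h]
    · apply Finset.sum_le_sum
      intro i _
      unfold boolToReal
      by_cases h : (0:ℝ) ≤ c i
      · simp only [h, decide_true, if_true, mul_one]
        calc c i * z i ≤ c i * 1 := by
              exact mul_le_mul_of_nonneg_left (hz i).2 h
          _ = c i := mul_one _
      · have h2 : c i * z i ≤ 0 :=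
          mul_nonpos_of_nonpos_of_nonneg (le_of_not_ge h) (hz i).1
        simp only [h, decide_false]
        norm_num
        linarith
  · rintro ⟨x, hx⟩
    refine ⟨x, fun y₀ => ?_⟩
    set c : Fin n → ℝ := fun i => if y₀ i then 1 else -1 with hc
    obtain ⟨y, ⟨hybox, hymax⟩, hfy⟩ := hx c (fun i => by
      by_cases h : y₀ i <;> simp [hc, h])
    have hy0box : ∀ i, boolToReal y₀ i ∈ Set.Icc (0:ℝ) 1 := fun i => by
      unfold boolToReal; by_cases h : y₀ i <;> simp [h]
    have hle : ∑ i, c i * boolToReal y₀ i ≤ ∑ i, c i * boolToReal y i :=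
      hymax _ hy0box
    have hterm : ∀ i, c i * boolToReal y i ≤ c i * boolToReal y₀ i := by
      intro i
      unfold boolToReal
      by_cases h0 : y₀ i <;> by_cases h1 : y i <;> simp [hc, h0, h1]
    have heq : y = y₀ := by
      by_contra hne
      obtain ⟨j, hj⟩ := Function.ne_iff.mp hne
      have hstrict : c j * boolToReal y j < c j * boolToReal y₀ j := by
        unfold boolToReal
        rcases Bool.eq_false_or_eq_true (y₀ j) with h0 | h0 <;>
          rcases Bool.eq_false_or_eq_true (y j) with h1 | h1 <;>
          simp [hc, h0, h1] at hj ⊢ <;> norm_num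
      have : ∑ i, c i * boolToReal y i < ∑ i, c i * boolToReal y₀ i :=
        Finset.sum_lt_sum (fun i _ => hterm i) ⟨j, Finset.mem_univ j, hstrict⟩
      linarith
    rw [← heq]; exact hfy
end

section
/- Let f : {0,1}^p × {0,1}^n → {0,1} be any function, regard its values as real numbers, and define V = max_{x ∈ {0,1}^p} min_{c ∈ [−1,1]^n} max{ f(x,y) : y ∈ {0,1}^n is a maximizer of c^T y over [0,1]^n }. Then V = 1 if there exists x ∈ {0,1}^p with f(x,y) = 1 for all y ∈ {0,1}^n, and V = 0 otherwise. -/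
lemma boolToReal_mem_box {n : ℕ} (y : Fin n → Bool) : ∀ i, boolToReal y i ∈ Set.Icc (0:ℝ) 1 := by
  intro i; unfold boolToReal; split_ifs <;> norm_num

lemma argmax_witness (n : ℕ) (c : Fin n → ℝ) :
    boolToReal (fun i => decide (0 ≤ c i)) ∈ argmaxBox n c := by
  refine ⟨boolToReal_mem_box _, ?_⟩
  intro z hz
  apply Finset.sum_le_sum
  intro i _
  rcases le_or_gt 0 (c i) with h | h
  · have h1 : boolToReal (fun i => decide (0 ≤ c i)) i = 1 := by simp [boolToReal, h]
    rw [h1, mul_one]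
    calc c i * z i ≤ c i * 1 := mul_le_mul_of_nonneg_left (hz i).2 h
      _ = c i := mul_one _
  · have h0 : boolToReal (fun i => decide (0 ≤ c i)) i = 0 := by
      simp [boolToReal, not_le.mpr h]
    rw [h0, mul_zero]
    exact mul_nonpos_of_nonpos_of_nonneg h.le (hz i).1

lemma argmax_unique {n : ℕ} (y₀ y : Fin n → Bool)
    (hy : boolToReal y ∈ argmaxBox n (fun i => if y₀ i then (1:ℝ) else -1)) : y = y₀ := by
  have h1 := hy.2 _ (boolToReal_mem_box y₀)
  have hterm : ∀ i ∈ Finset.univ,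
      (if y₀ i then (1:ℝ) else -1) * boolToReal y i
        ≤ (if y₀ i then (1:ℝ) else -1) * boolToReal y₀ i := by
    intro i _
    by_cases h : y₀ i <;> by_cases h' : y i <;> simp [boolToReal, h, h']
  have h2 : ∑ i, (if y₀ i then (1:ℝ) else -1) * boolToReal y i
      = ∑ i, (if y₀ i then (1:ℝ) else -1) * boolToReal y₀ i :=
    le_antisymm (Finset.sum_le_sum hterm) h1
  have h3 := (Finset.sum_eq_sum_iff_of_le hterm).mp h2
  funext i
  have hi := h3 i (Finset.mem_univ i)
  by_cases h : y₀ i <;> by_cases h' : y i <;>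
    simp [boolToReal, h, h'] at hi ⊢

lemma argmax_self {n : ℕ} (y₀ : Fin n → Bool) :
    boolToReal y₀ ∈ argmaxBox n (fun i => if y₀ i then (1:ℝ) else -1) := by
  have hdec : (fun i => decide ((0:ℝ) ≤ if y₀ i then (1:ℝ) else -1)) = y₀ := by
    funext i
    by_cases h : y₀ i <;> simp [h]
  have hw := argmax_witness n (fun i => if y₀ i then (1:ℝ) else -1)
  rwa [hdec] at hw

/-- The value `V = max_x min_{c ∈ [-1,1]^n} max {f(x,y) : y binary maximizer of cᵀy}` of the
optimistic robust bilevel problem is `1` if `f` is a QSAT yes-instance and `0` otherwise. -/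
theorem stmt_7 (p n : ℕ) (f : (Fin p → Bool) → (Fin n → Bool) → Bool) :
    ((∃ x : Fin p → Bool, ∀ y : Fin n → Bool, f x y = true) →
      (⨆ x : Fin p → Bool,
        sInf ((fun c : Fin n → ℝ =>
            sSup ((fun y : Fin n → Bool => if f x y then (1 : ℝ) else 0) ''
              {y : Fin n → Bool | boolToReal y ∈ argmaxBox n c})) ''
          {c : Fin n → ℝ | ∀ i, c i ∈ Set.Icc (-1 : ℝ) 1})) = 1) ∧
    (¬ (∃ x : Fin p → Bool, ∀ y : Fin n → Bool, f x y = true) →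
      (⨆ x : Fin p → Bool,
        sInf ((fun c : Fin n → ℝ =>
            sSup ((fun y : Fin n → Bool => if f x y then (1 : ℝ) else 0) ''
              {y : Fin n → Bool | boolToReal y ∈ argmaxBox n c})) ''
          {c : Fin n → ℝ | ∀ i, c i ∈ Set.Icc (-1 : ℝ) 1})) = 0) := by
  classical
  set Box : Set (Fin n → ℝ) := {c : Fin n → ℝ | ∀ i, c i ∈ Set.Icc (-1 : ℝ) 1} with hBoxdef
  set S : (Fin p → Bool) → (Fin n → ℝ) → Set ℝ := fun x c =>
    ((fun y : Fin n → Bool => if f x y then (1 : ℝ) else 0) ''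
      {y : Fin n → Bool | boolToReal y ∈ argmaxBox n c}) with hSdef
  set G : (Fin p → Bool) → ℝ := fun x => sInf ((fun c => sSup (S x c)) '' Box) with hGdef
  have hSne : ∀ x c, (S x c).Nonempty := by
    intro x c
    exact ⟨_, ⟨_, argmax_witness n c, rfl⟩⟩
  have hS01 : ∀ x c, ∀ v ∈ S x c, 0 ≤ v ∧ v ≤ 1 := by
    rintro x c v ⟨y, -, rfl⟩
    by_cases h : f x y <;> simp [h]
  have hsSup_le : ∀ x c, sSup (S x c) ≤ 1 := fun x c =>
    csSup_le (hSne x c) (fun v hv => (hS01 x c v hv).2)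
  have hsSup_ge : ∀ x c, 0 ≤ sSup (S x c) := by
    intro x c
    obtain ⟨v, hv⟩ := hSne x c
    exact le_trans (hS01 x c v hv).1
      (le_csSup ⟨1, fun w hw => (hS01 x c w hw).2⟩ hv)
  have h0Box : (0 : Fin n → ℝ) ∈ Box := by
    intro i; simp
  have hBoxne : Box.Nonempty := ⟨0, h0Box⟩
  have hTne : ∀ x, ((fun c => sSup (S x c)) '' Box).Nonempty := fun x => hBoxne.image _
  have hTbdd : ∀ x, BddBelow ((fun c => sSup (S x c)) '' Box) := by
    rintro x
    exact ⟨0, by rintro t ⟨c, -, rfl⟩; exact hsSup_ge x c⟩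
  have hG_le_one : ∀ x, G x ≤ 1 := fun x =>
    le_trans (csInf_le (hTbdd x) ⟨0, h0Box, rfl⟩) (hsSup_le x 0)
  have hG_ge_zero : ∀ x, 0 ≤ G x := fun x =>
    le_csInf (hTne x) (by rintro t ⟨c, -, rfl⟩; exact hsSup_ge x c)
  have hbddG : BddAbove (Set.range G) := Set.Finite.bddAbove (Set.finite_range G)
  constructor
  · rintro ⟨x₀, hx₀⟩
    have hGx₀ : G x₀ = 1 := by
      refine le_antisymm (hG_le_one x₀) ?_
      refine le_csInf (hTne x₀) ?_
      rintro t ⟨c, -, rfl⟩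
      have h1mem : (1:ℝ) ∈ S x₀ c :=
        ⟨_, argmax_witness n c, by simp [hx₀]⟩
      exact le_csSup ⟨1, fun w hw => (hS01 x₀ c w hw).2⟩ h1mem
    refine le_antisymm (ciSup_le hG_le_one) ?_
    calc (1:ℝ) = G x₀ := hGx₀.symm
      _ ≤ ⨆ x, G x := le_ciSup hbddG x₀
  · intro hno
    push_neg at hno
    have hGzero : ∀ x, G x = 0 := by
      intro x
      obtain ⟨y₀, hy₀⟩ := hno x
      have hy₀' : f x y₀ = false := by simpa using hy₀
      have hc₀box : (fun i => if y₀ i then (1:ℝ) else -1) ∈ Box := by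
        intro i; by_cases h : y₀ i <;> simp [h]
      have hset : {y : Fin n → Bool |
          boolToReal y ∈ argmaxBox n (fun i => if y₀ i then (1:ℝ) else -1)} = {y₀} := by
        ext y
        constructor
        · exact fun h => argmax_unique y₀ y h
        · intro h
          rw [Set.mem_singleton_iff] at h
          rw [h]
          exact argmax_self y₀
      have hSval : S x (fun i => if y₀ i then (1:ℝ) else -1) = {0} := by
        rw [hSdef]
        simp only [hset, Set.image_singleton, hy₀']
        norm_num
      have hsup0 : sSup (S x (fun i => if y₀ i then (1:ℝ) else -1)) = 0 := by
        rw [hSval]; exact csSup_singleton 0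
      refine le_antisymm ?_ (hG_ge_zero x)
      calc G x ≤ sSup (S x (fun i => if y₀ i then (1:ℝ) else -1)) :=
            csInf_le (hTbdd x) ⟨_, hc₀box, rfl⟩
        _ = 0 := hsup0
    calc (⨆ x, G x) = ⨆ _ : Fin p → Bool, (0:ℝ) := by
          congr 1; funext x; exact hGzero x
      _ = 0 := ciSup_const
end

section
/- Let c_1, …, c_m ∈ ℝ^p, x ∈ ℝ^p, and for z ∈ ℝ^m define φ_x(z) = Σ_{j=1}^m (c_j^T x) z_j. Consider the feasible set F(x) = { (y, z) ∈ ℝ × Δ_m : y = φ_x(z) }, where Δ_m is the standard simplex. Then for every j ∈ {1, …, m}, the unique maximizer of (y, z) ↦ e_j^T z over F(x) is (c_j^T x, e_j). Consequently, for every set X ⊆ {0,1}^p, sup_{x ∈ X} min_{j ∈ {1,…,m}} ( y-component of the unique maximizer of e_j^T z over F(x) ) = sup_{x ∈ X} min_{j ∈ {1,…,m}} c_j^T x. -/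
/-- The standard simplex `Δ_m = {z ∈ ℝ^m : z ≥ 0, ∑ z i = 1}`. -/
def stdSimplex' (m : ℕ) : Set (Fin m → ℝ) :=
  {z | (∀ i, 0 ≤ z i) ∧ ∑ i, z i = 1}

/-- The follower's feasible set `F(x) = {(y,z) ∈ ℝ × Δ_m : y = ∑ j (c_jᵀ x) z_j}`. -/
def feas (p m : ℕ) (c : Fin m → Fin p → ℝ) (x : Fin p → ℝ) : Set (ℝ × (Fin m → ℝ)) :=
  {q | q.2 ∈ stdSimplex' m ∧ q.1 = ∑ j, (∑ i, c j i * x i) * q.2 j}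

/-- The set of maximizers of `(y,z) ↦ z j` over `F(x)`. -/
def maxSet (p m : ℕ) (c : Fin m → Fin p → ℝ) (x : Fin p → ℝ) (j : Fin m) :
    Set (ℝ × (Fin m → ℝ)) :=
  {q ∈ feas p m c x | ∀ r ∈ feas p m c x, r.2 j ≤ q.2 j}

lemma ej_feas (p m : ℕ) (c : Fin m → Fin p → ℝ) (x : Fin p → ℝ) (j : Fin m) :
    ((∑ i, c j i * x i, fun i => if i = j then (1 : ℝ) else 0) : ℝ × (Fin m → ℝ))
      ∈ feas p m c x := by
  refine ⟨⟨fun i => ?_, ?_⟩, ?_⟩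
  · by_cases h : i = j <;> simp [h]
  · simp
  · simp

/-- For every `x` and `j`, the unique maximizer of `(y,z) ↦ e_jᵀ z` over `F(x)` is
`(c_jᵀ x, e_j)`; consequently, for every `X ⊆ {0,1}^p`, the robust bilevel value
`sup_{x ∈ X} min_j (y`-component of the unique maximizer`)` equals
`sup_{x ∈ X} min_j c_jᵀ x`. -/
theorem stmt_13 (p m : ℕ) (hm : 1 ≤ m) (c : Fin m → Fin p → ℝ) :
    (∀ x : Fin p → ℝ, ∀ j : Fin m,
      maxSet p m c x j = {(∑ i, c j i * x i, fun i => if i = j then (1 : ℝ) else 0)}) ∧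
    (∀ X : Set (Fin p → ℝ), (∀ x ∈ X, ∀ i, x i = 0 ∨ x i = 1) →
      ∀ sel : (Fin p → ℝ) → Fin m → ℝ × (Fin m → ℝ),
        (∀ x ∈ X, ∀ j : Fin m, sel x j ∈ maxSet p m c x j) →
        sSup ((fun x => ⨅ j : Fin m, (sel x j).1) '' X)
          = sSup ((fun x => ⨅ j : Fin m, ∑ i, c j i * x i) '' X)) := by
  have hbound : ∀ x, ∀ r ∈ feas p m c x, ∀ j, r.2 j ≤ 1 := by
    intro x r hr j
    obtain ⟨⟨hpos, hsum⟩, _⟩ := hr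
    calc r.2 j ≤ ∑ i, r.2 i := Finset.single_le_sum (fun i _ => hpos i) (Finset.mem_univ j)
    _ = 1 := hsum
  have key : ∀ x : Fin p → ℝ, ∀ j : Fin m,
      maxSet p m c x j = {(∑ i, c j i * x i, fun i => if i = j then (1 : ℝ) else 0)} := by
    intro x j
    ext q
    simp only [Set.mem_singleton_iff]
    constructor
    · rintro ⟨hqf, hmax⟩
      have h1 : q.2 j = 1 := by
        have hle := hbound x q hqf j
        have hge := hmax _ (ej_feas p m c x j)
        simp at hge
        linarith
      obtain ⟨⟨hpos, hsum⟩, hy⟩ := hqf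
      have hzero : ∀ i, i ≠ j → q.2 i = 0 := by
        have hs : ∑ i ∈ Finset.univ.erase j, q.2 i = 0 := by
          have := Finset.add_sum_erase Finset.univ q.2 (Finset.mem_univ j)
          rw [← this] at hsum
          linarith
        intro i hi
        have := (Finset.sum_eq_zero_iff_of_nonneg (fun i _ => hpos i)).1 hs i
          (Finset.mem_erase.2 ⟨hi, Finset.mem_univ i⟩)
        exact this
      have hz : q.2 = fun i => if i = j then (1 : ℝ) else 0 := by
        funext i
        by_cases h : i = j
        · simp [h, h1]
        · simp [h, hzero i h]
      have hy' : q.1 = ∑ i, c j i * x i := by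
        rw [hy, hz]; simp
      exact Prod.ext hy' hz
    · rintro rfl
      refine ⟨ej_feas p m c x j, fun r hr => ?_⟩
      simpa using hbound x r hr j
  refine ⟨key, ?_⟩
  intro X hX sel hsel
  congr 1
  apply Set.image_congr
  intro x hx
  have : ∀ j, (sel x j).1 = ∑ i, c j i * x i := by
    intro j
    have := hsel x hx j
    rw [key x j] at this
    simp only [Set.mem_singleton_iff] at this
    rw [this]
  simp [this]
end
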